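/- arXiv:2111.01060 — 4 statements merged into one kernel-verified Lean document; each statement's English description precedes it below -/
import Mathlib

section
/- Let f : {−1,1}^n → {−1,1} and C : {−1,1}^n → {−1,1}^m be arbitrary functions, let Q ⊆ [m] with |Q| = q, and let ε > 0. If for every subset S ⊆ Q one has |E_x[f(x) · ∏_{j∈S} C(x)_j]| < ε/2^q, where x is uniform over {−1,1}^n, then for every function g : {−1,1}^q → {−1,1}, Pr_x[g(C(x)_Q) = f(x)] < (1 + ε)/2, where C(x)_Q denotes the restriction of C(x) to the coordinates in Q. -/
open scoped Classical

/-- The identification of `Bool` with the multiplicative cube `{−1, 1} ⊆ ℝ`. -/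
noncomputable def pmOfBool (b : Bool) : ℝ := if b then 1 else -1

lemma pm_abs (b : Bool) : |pmOfBool b| = 1 := by cases b <;> simp [pmOfBool]

lemma pm_mul_self (b : Bool) : pmOfBool b * pmOfBool b = 1 := by
  cases b <;> norm_num [pmOfBool]

lemma prod_pm_eq {q : ℕ} (v w : Fin q → Bool) :
    (∏ j : Fin q, (pmOfBool (v j) * pmOfBool (w j) + 1)) =
      if v = w then (2:ℝ)^q else 0 := by
  by_cases h : v = w
  · subst h
    simp only [pm_mul_self, Finset.prod_const, Finset.card_univ, Fintype.card_fin, if_pos rfl]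
    norm_num
  · simp only [if_neg h]
    obtain ⟨j, hj⟩ : ∃ j, v j ≠ w j := by
      by_contra hc
      push_neg at hc
      exact h (funext hc)
    apply Finset.prod_eq_zero (Finset.mem_univ j)
    cases hv : v j <;> cases hw : w j <;> simp_all [pmOfBool]

lemma fourier_expand {q : ℕ} (g : (Fin q → ℝ) → ℝ) (w : Fin q → Bool) :
    ∑ T : Finset (Fin q),
        ((∑ v : Fin q → Bool,
            g (fun j => pmOfBool (v j)) * ∏ j ∈ T, pmOfBool (v j)) / 2 ^ q) *
          ∏ j ∈ T, pmOfBool (w j)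
      = g (fun j => pmOfBool (w j)) := by
  have key : ∀ T : Finset (Fin q),
      ((∑ v : Fin q → Bool,
          g (fun j => pmOfBool (v j)) * ∏ j ∈ T, pmOfBool (v j)) / 2 ^ q) *
        ∏ j ∈ T, pmOfBool (w j)
      = ∑ v : Fin q → Bool,
          g (fun j => pmOfBool (v j)) / 2 ^ q *
            ∏ j ∈ T, (pmOfBool (v j) * pmOfBool (w j)) := by
    intro T
    rw [div_mul_eq_mul_div, Finset.sum_mul, Finset.sum_div]
    congr 1
    ext v
    rw [Finset.prod_mul_distrib]
    ring
  rw [Finset.sum_congr rfl fun T _ => key T, Finset.sum_comm]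
  have key2 : ∀ v : Fin q → Bool,
      ∑ T : Finset (Fin q),
          g (fun j => pmOfBool (v j)) / 2 ^ q *
            ∏ j ∈ T, (pmOfBool (v j) * pmOfBool (w j))
      = g (fun j => pmOfBool (v j)) / 2 ^ q * (if v = w then (2:ℝ)^q else 0) := by
    intro v
    rw [← Finset.mul_sum]
    congr 1
    rw [← prod_pm_eq v w]
    rw [Finset.prod_add, Finset.powerset_univ]
    simp
  rw [Finset.sum_congr rfl fun v _ => key2 v]
  simp only [mul_ite, mul_zero]
  rw [Finset.sum_ite_eq' Finset.univ w
    (fun v => g (fun j => pmOfBool (v j)) / 2 ^ q * (2:ℝ)^q)]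
  simp only [Finset.mem_univ, if_true]
  field_simp

/-- Let `f : {−1,1}^n → {−1,1}` and `C : {−1,1}^n → {−1,1}^m` be
arbitrary functions, `Q ⊆ [m]` with `|Q| = q`, and `ε > 0`.  If for every `S ⊆ Q`,
`|E_x[f(x)·∏_{j∈S} C(x)_j]| < ε/2^q` (for uniform `x ∈ {−1,1}^n`), then for every
`g : {−1,1}^q → {−1,1}`, `Pr_x[g(C(x)_Q) = f(x)] < (1+ε)/2`, where `C(x)_Q` lists the
coordinates of `C(x)` indexed by `Q` in increasing order. -/
theorem low_correlation_implies_no_good_predictor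
    {n m q : ℕ} (Q : Finset (Fin m)) (hQ : Q.card = q) (ε : ℝ) (hε : 0 < ε)
    (f : (Fin n → ℝ) → ℝ) (C : (Fin n → ℝ) → Fin m → ℝ)
    (hf : ∀ s : Fin n → Bool,
      f (fun i => pmOfBool (s i)) = 1 ∨ f (fun i => pmOfBool (s i)) = -1)
    (hC : ∀ (s : Fin n → Bool) (j : Fin m),
      C (fun i => pmOfBool (s i)) j = 1 ∨ C (fun i => pmOfBool (s i)) j = -1)
    (hcorr : ∀ S ⊆ Q,
      |(∑ s : Fin n → Bool,
          f (fun i => pmOfBool (s i)) * ∏ j ∈ S, C (fun i => pmOfBool (s i)) j) /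
        2 ^ n| < ε / 2 ^ q)
    (g : (Fin q → ℝ) → ℝ)
    (hg : ∀ v : Fin q → Bool,
      g (fun j => pmOfBool (v j)) = 1 ∨ g (fun j => pmOfBool (v j)) = -1) :
    ((Finset.univ.filter fun s : Fin n → Bool =>
        g (fun j => C (fun i => pmOfBool (s i)) (Q.orderIsoOfFin hQ j).1) =
          f (fun i => pmOfBool (s i))).card : ℝ) / 2 ^ n < (1 + ε) / 2 := by
  set F : (Fin n → Bool) → ℝ := fun s => f (fun i => pmOfBool (s i)) with hF
  set y : (Fin n → Bool) → Fin q → ℝ :=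
    fun s j => C (fun i => pmOfBool (s i)) (Q.orderIsoOfFin hQ j).1 with hy
  set vb : (Fin n → Bool) → Fin q → Bool :=
    fun s j => if y s j = 1 then true else false with hvb
  have hyv : ∀ s, y s = fun j => pmOfBool (vb s j) := by
    intro s
    funext j
    have hC' : y s j = 1 ∨ y s j = -1 := hC s ((Q.orderIsoOfFin hQ) j).1
    by_cases hcase : y s j = 1
    · have hb : vb s j = true := by rw [hvb]; simp [hcase]
      rw [hcase, hb]; rfl
    · have h' : y s j = -1 := hC'.resolve_left hcase
      have hb : vb s j = false := by rw [hvb]; simp [hcase]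
      rw [h', hb]; rfl
  set G : (Fin n → Bool) → ℝ := fun s => g (y s) with hG
  have hG1 : ∀ s, G s = 1 ∨ G s = -1 := by
    intro s
    have := hg (vb s)
    show g (y s) = 1 ∨ g (y s) = -1
    rw [hyv s]
    exact this
  set ghat : Finset (Fin q) → ℝ := fun T =>
    (∑ v : Fin q → Bool,
        g (fun j => pmOfBool (v j)) * ∏ j ∈ T, pmOfBool (v j)) / 2 ^ q with hghat
  have hghat1 : ∀ T, |ghat T| ≤ 1 := by
    intro T
    rw [hghat]
    simp only
    rw [abs_div, abs_of_pos (by positivity : (0:ℝ) < 2 ^ q)]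
    rw [div_le_one (by positivity)]
    calc |∑ v : Fin q → Bool, g (fun j => pmOfBool (v j)) * ∏ j ∈ T, pmOfBool (v j)|
        ≤ ∑ v : Fin q → Bool, |g (fun j => pmOfBool (v j)) * ∏ j ∈ T, pmOfBool (v j)| :=
          Finset.abs_sum_le_sum_abs _ _
      _ ≤ ∑ _v : Fin q → Bool, (1:ℝ) := by
          apply Finset.sum_le_sum
          intro v _
          rw [abs_mul]
          have h1 : |g (fun j => pmOfBool (v j))| = 1 := by
            rcases hg v with h | h <;> rw [h] <;> norm_num
          have h2 : |∏ j ∈ T, pmOfBool (v j)| = 1 := by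
            rw [Finset.abs_prod]
            simp [pm_abs]
          rw [h1, h2]; norm_num
      _ = 2 ^ q := by
          rw [Finset.sum_const, Finset.card_univ, nsmul_eq_mul, mul_one]
          simp
  set e : Fin q → Fin m := fun j => (Q.orderIsoOfFin hQ j).1 with he
  have he_inj : Function.Injective e :=
    Subtype.val_injective.comp (Q.orderIsoOfFin hQ).injective
  have he_mem : ∀ j, e j ∈ Q := fun j => (Q.orderIsoOfFin hQ j).2
  have hprod : ∀ (s : Fin n → Bool) (T : Finset (Fin q)),
      ∏ j ∈ T.image e, C (fun i => pmOfBool (s i)) j = ∏ j ∈ T, y s j := by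
    intro s T
    rw [Finset.prod_image (fun a _ b _ h => he_inj h)]
  set Scorr : Finset (Fin q) → ℝ := fun T =>
    (∑ s : Fin n → Bool, F s * ∏ j ∈ T, y s j) / 2 ^ n with hScorr
  have hScorr_lt : ∀ T, |Scorr T| < ε / 2 ^ q := by
    intro T
    have hsub : T.image e ⊆ Q := by
      intro x hx
      obtain ⟨j, _, rfl⟩ := Finset.mem_image.mp hx
      exact he_mem j
    have h := hcorr (T.image e) hsub
    have heq : (∑ s : Fin n → Bool,
        f (fun i => pmOfBool (s i)) * ∏ j ∈ T.image e, C (fun i => pmOfBool (s i)) j)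
        = ∑ s : Fin n → Bool, F s * ∏ j ∈ T, y s j := by
      apply Finset.sum_congr rfl
      intro s _
      rw [hprod s T]
    rw [heq] at h
    exact h
  have hexp : ∀ s, G s = ∑ T : Finset (Fin q), ghat T * ∏ j ∈ T, y s j := by
    intro s
    show g (y s) = _
    conv_lhs => rw [hyv s]
    rw [← fourier_expand g (vb s)]
    apply Finset.sum_congr rfl
    intro T _
    congr 1
    apply Finset.prod_congr rfl
    intro j _
    rw [hyv s]
  have hsum_eq : (∑ s : Fin n → Bool, G s * F s) / 2 ^ n
      = ∑ T : Finset (Fin q), ghat T * Scorr T := by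
    have h1 : (∑ s : Fin n → Bool, G s * F s)
        = ∑ T : Finset (Fin q), ∑ s : Fin n → Bool, ghat T * (∏ j ∈ T, y s j) * F s := by
      rw [Finset.sum_comm]
      apply Finset.sum_congr rfl
      intro s _
      rw [hexp s, Finset.sum_mul]
    rw [h1, Finset.sum_div]
    apply Finset.sum_congr rfl
    intro T _
    have h2 : ∑ s : Fin n → Bool, ghat T * (∏ j ∈ T, y s j) * F s
        = ghat T * ∑ s : Fin n → Bool, F s * ∏ j ∈ T, y s j := by
      rw [Finset.mul_sum]
      apply Finset.sum_congr rfl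
      intro s _
      ring
    rw [h2, mul_div_assoc]
  have hbound : |(∑ s : Fin n → Bool, G s * F s) / 2 ^ n| < ε := by
    rw [hsum_eq]
    calc |∑ T : Finset (Fin q), ghat T * Scorr T|
        ≤ ∑ T : Finset (Fin q), |ghat T * Scorr T| := Finset.abs_sum_le_sum_abs _ _
      _ < ∑ _T : Finset (Fin q), ε / 2 ^ q := by
          apply Finset.sum_lt_sum_of_nonempty Finset.univ_nonempty
          intro T _
          rw [abs_mul]
          calc |ghat T| * |Scorr T| ≤ 1 * |Scorr T| :=
                mul_le_mul_of_nonneg_right (hghat1 T) (abs_nonneg _)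
            _ = |Scorr T| := one_mul _
            _ < ε / 2 ^ q := hScorr_lt T
      _ = ε := by
          rw [Finset.sum_const, Finset.card_univ, Fintype.card_finset, Fintype.card_fin]
          rw [nsmul_eq_mul]
          field_simp
          norm_num
  have hcount : ((Finset.univ.filter fun s : Fin n → Bool =>
        g (fun j => C (fun i => pmOfBool (s i)) (Q.orderIsoOfFin hQ j).1) =
          f (fun i => pmOfBool (s i))).card : ℝ)
      = ∑ s : Fin n → Bool, (1 + G s * F s) / 2 := by
    rw [Finset.card_filter]
    push_cast
    apply Finset.sum_congr rfl
    intro s _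
    have hGs : g (fun j => C (fun i => pmOfBool (s i)) (Q.orderIsoOfFin hQ j).1) = G s := rfl
    have hFs : F s = f (fun i => pmOfBool (s i)) := rfl
    rw [hGs, ← hFs]
    have hFpm : F s = 1 ∨ F s = -1 := hf s
    rcases hG1 s with h | h <;> rcases hFpm with h2 | h2 <;> rw [h, h2] <;> norm_num
  rw [hcount]
  have hcard : ((Finset.univ : Finset (Fin n → Bool)).card : ℝ) = 2 ^ n := by
    rw [Finset.card_univ]
    simp [Fintype.card_fun]
  have hsplit : (∑ s : Fin n → Bool, (1 + G s * F s) / 2)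
      = ((2:ℝ) ^ n + ∑ s : Fin n → Bool, G s * F s) / 2 := by
    rw [← Finset.sum_div]
    congr 1
    rw [Finset.sum_add_distrib, Finset.sum_const, nsmul_eq_mul, mul_one, hcard]
  rw [hsplit]
  have h2n : (0:ℝ) < 2 ^ n := by positivity
  have hS : (∑ s : Fin n → Bool, G s * F s) / 2 ^ n < ε :=
    lt_of_le_of_lt (le_abs_self _) hbound
  have hrw : ((2:ℝ) ^ n + ∑ s : Fin n → Bool, G s * F s) / 2 / 2 ^ n
      = (1 + (∑ s : Fin n → Bool, G s * F s) / 2 ^ n) / 2 := by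
    rw [div_div, mul_comm, ← div_div, add_div, div_self (ne_of_gt h2n)]
  rw [hrw]
  linarith
end

section
/- Let q ≥ 1 be an integer, ε ∈ (0, 1/2], and let x be uniformly random over {0,1}^n. Let Y be any random variable taking values in {0,1}^q that is a (possibly randomized) function of x, where the extra randomness is independent of x. Then the number of indices i ∈ [n] for which there exists a Boolean function f : {0,1}^q → {0,1} with Pr[f(Y) = x_i] ≥ 1/2 + ε/4 is at most q / (1 − H(1/2 + ε/4)). -/
open scoped ENNReal Classical

noncomputable def binaryEntropy (p : ℝ) : ℝ :=
  -p * Real.logb 2 p - (1 - p) * Real.logb 2 (1 - p)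

lemma binaryEntropy_eq (p : ℝ) : binaryEntropy p = Real.binEntropy p / Real.log 2 := by
  rw [binaryEntropy, Real.binEntropy, Real.logb, Real.logb, Real.log_inv, Real.log_inv]
  ring

section EntropyAux
open Real Finset
variable {α β : Type*} [Fintype α] [Fintype β]

private noncomputable def ent (μ : α → ℝ) : ℝ := ∑ a, Real.negMulLog (μ a)

private lemma ent_nonneg {μ : α → ℝ} (h0 : ∀ a, 0 ≤ μ a) (h1 : ∑ a, μ a = 1) : 0 ≤ ent μ := by
  refine Finset.sum_nonneg fun a _ => Real.negMulLog_nonneg (h0 a) ?_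
  calc μ a ≤ ∑ b, μ b := Finset.single_le_sum (fun b _ => h0 b) (mem_univ a)
    _ = 1 := h1

private lemma gibbs {μ g : α → ℝ} (h0 : ∀ a, 0 ≤ μ a) (hg0 : ∀ a, 0 ≤ g a)
    (h1 : ∑ a, μ a = 1) (hgs : ∑ a, g a ≤ 1) (hsupp : ∀ a, μ a ≠ 0 → 0 < g a) :
    ent μ ≤ ∑ a, μ a * Real.log (g a)⁻¹ := by
  have key : ∀ a, Real.negMulLog (μ a) - μ a * Real.log (g a)⁻¹ ≤ g a - μ a := by
    intro a
    rcases eq_or_lt_of_le (h0 a) with h | h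
    · simp [← h, hg0 a]
    · have hg := hsupp a h.ne'
      have : Real.negMulLog (μ a) - μ a * Real.log (g a)⁻¹ = μ a * Real.log (g a / μ a) := by
        rw [Real.negMulLog, Real.log_div hg.ne' h.ne', Real.log_inv]; ring
      rw [this]
      calc μ a * Real.log (g a / μ a) ≤ μ a * (g a / μ a - 1) := by
            exact mul_le_mul_of_nonneg_left
              (Real.log_le_sub_one_of_pos (div_pos hg h)) (h0 a)
        _ = g a - μ a := by field_simp
  have : ent μ - ∑ a, μ a * Real.log (g a)⁻¹ ≤ (∑ a, g a) - 1 := by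
    rw [ent, ← Finset.sum_sub_distrib, ← h1, ← Finset.sum_sub_distrib]
    exact Finset.sum_le_sum fun a _ => key a
  linarith

private lemma ent_le_log_card {μ : α → ℝ} (h0 : ∀ a, 0 ≤ μ a) (h1 : ∑ a, μ a = 1) :
    ent μ ≤ Real.log (Fintype.card α) := by
  rcases isEmpty_or_nonempty α with h | h
  · simp [ent, h1.symm]
  have hcard : (0 : ℝ) < (Fintype.card α : ℝ) := by
    exact_mod_cast Fintype.card_pos
  have := gibbs (g := fun _ => (Fintype.card α : ℝ)⁻¹) h0 (fun _ => by positivity) h1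
    (by rw [Finset.sum_const, card_univ, nsmul_eq_mul]; rw [mul_inv_cancel₀ hcard.ne'])
    (fun a _ => by positivity)
  refine this.trans_eq ?_
  rw [← Finset.sum_mul, h1, one_mul, inv_inv]

private lemma ent_chain (p : α → ℝ) (k : α → β → ℝ)
    (hk1 : ∀ a, p a ≠ 0 → ∑ b, k a b = 1) :
    ∑ a, ∑ b, Real.negMulLog (p a * k a b) = ent p + ∑ a, p a * ent (k a) := by
  rw [ent, ← Finset.sum_add_distrib]
  refine Finset.sum_congr rfl fun a _ => ?_
  rcases eq_or_ne (p a) 0 with h | h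
  · simp [h]
  · have : ∀ b, Real.negMulLog (p a * k a b)
        = k a b * Real.negMulLog (p a) + p a * Real.negMulLog (k a b) :=
      fun b => Real.negMulLog_mul _ _
    simp only [this, Finset.sum_add_distrib, ← Finset.sum_mul, ← Finset.mul_sum, hk1 a h,
      one_mul, ent]

variable {ι : Type*} [Fintype ι] [DecidableEq ι]

private noncomputable def marg (μ : (ι → Bool) → ℝ) (i : ι) (b : Bool) : ℝ :=
  ∑ x ∈ Finset.univ.filter (fun x : ι → Bool => x i = b), μ x

private lemma marg_nonneg {μ : (ι → Bool) → ℝ} (h0 : ∀ x, 0 ≤ μ x) (i : ι) (b : Bool) :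
    0 ≤ marg μ i b := Finset.sum_nonneg fun x _ => h0 x

private lemma sum_marg (μ : (ι → Bool) → ℝ) (i : ι) : ∑ b, marg μ i b = ∑ x, μ x := by
  simp only [marg]; exact Finset.sum_fiberwise_of_maps_to (fun x _ => mem_univ _) μ

private lemma le_marg {μ : (ι → Bool) → ℝ} (h0 : ∀ x, 0 ≤ μ x) (i : ι) (x : ι → Bool) :
    μ x ≤ marg μ i (x i) :=
  Finset.single_le_sum (fun y _ => h0 y) (by simp)

private lemma sum_comp_marg (μ : (ι → Bool) → ℝ) (i : ι) (F : Bool → ℝ) :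
    ∑ x, μ x * F (x i) = ∑ b, marg μ i b * F b := by
  simp only [marg, Finset.sum_mul]
  rw [← Finset.sum_fiberwise_of_maps_to (g := fun x : ι → Bool => x i)
    (fun x _ => mem_univ _) (fun x => μ x * F (x i))]
  refine Finset.sum_congr rfl fun b _ => Finset.sum_congr rfl fun x hx => ?_
  rw [(Finset.mem_filter.mp hx).2]

private lemma ent_subadd {μ : (ι → Bool) → ℝ} (h0 : ∀ x, 0 ≤ μ x) (h1 : ∑ x, μ x = 1) :
    ent μ ≤ ∑ i, ent (marg μ i) := by
  set g : (ι → Bool) → ℝ := fun x => ∏ i, marg μ i (x i) with hg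
  have hg0 : ∀ x, 0 ≤ g x := fun x => Finset.prod_nonneg fun i _ => marg_nonneg h0 i _
  have hgs : ∑ x, g x ≤ 1 := by
    rw [hg]
    have : ∑ x : ι → Bool, ∏ i, marg μ i (x i) = ∏ i, ∑ b, marg μ i b := by
      rw [Finset.prod_univ_sum, Fintype.piFinset_univ]
    rw [this]
    simp only [sum_marg, h1, Finset.prod_const_one, le_refl]
  have hsupp : ∀ x, μ x ≠ 0 → 0 < g x := by
    intro x hx
    exact Finset.prod_pos fun i _ => lt_of_lt_of_le ((h0 x).lt_of_ne (Ne.symm hx)) (le_marg h0 i x)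
  have h := gibbs h0 hg0 h1 hgs hsupp
  refine h.trans_eq ?_
  have negMulLog_eq : ∀ t : ℝ, t * Real.log t⁻¹ = Real.negMulLog t := by
    intro t; simp [Real.negMulLog, Real.log_inv]
  have step : ∀ x, μ x * Real.log (g x)⁻¹ = ∑ i, μ x * Real.log (marg μ i (x i))⁻¹ := by
    intro x
    rcases eq_or_ne (μ x) 0 with h' | h'
    · simp [h']
    · have hpos : ∀ i, 0 < marg μ i (x i) :=
        fun i => lt_of_lt_of_le ((h0 x).lt_of_ne (Ne.symm h')) (le_marg h0 i x)
      rw [← Finset.mul_sum]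
      congr 1
      rw [hg]
      simp only []
      rw [← Finset.prod_inv_distrib,
        Real.log_prod (fun i _ => inv_ne_zero (hpos i).ne')]
  calc ∑ x, μ x * Real.log (g x)⁻¹
      = ∑ x, ∑ i, μ x * Real.log (marg μ i (x i))⁻¹ :=
        Finset.sum_congr rfl fun x _ => step x
    _ = ∑ i, ∑ x, μ x * Real.log (marg μ i (x i))⁻¹ := Finset.sum_comm
    _ = ∑ i, ∑ b, marg μ i b * Real.log (marg μ i b)⁻¹ :=
        Finset.sum_congr rfl fun i _ => sum_comp_marg μ i (fun b => Real.log (marg μ i b)⁻¹)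
    _ = ∑ i, ent (marg μ i) := by
        refine Finset.sum_congr rfl fun i _ => Finset.sum_congr rfl fun b _ => ?_
        exact negMulLog_eq _

end EntropyAux

set_option maxHeartbeats 1000000 in
/-- Let `q ≥ 1`, `ε ∈ (0,1/2]`, and let `x` be uniform over
`{0,1}^n`.  Let `Y` be any randomized function of `x` with values in `{0,1}^q` (given
by its conditional distribution `Y x`, the extra randomness being independent of `x`).
Then the number of indices `i` for which some Boolean function `f : {0,1}^q → {0,1}`
predicts `x i` from `Y` with probability at least `1/2 + ε/4` is at most
`q / (1 − H(1/2 + ε/4))`. -/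
theorem few_indices_predictable_from_few_bits
    (q n : ℕ) (hq : 1 ≤ q) (ε : ℝ) (hε : ε ∈ Set.Ioc (0 : ℝ) (1 / 2))
    (Y : (Fin n → Bool) → PMF (Fin q → Bool)) :
    ((Finset.univ.filter fun i : Fin n =>
        ∃ f : (Fin q → Bool) → Bool,
          ENNReal.ofReal (1 / 2 + ε / 4) ≤
            (((PMF.uniformOfFintype (Fin n → Bool)).bind fun x =>
                (Y x).map fun y => (x, y))).toOuterMeasure
              {t | f t.2 = t.1 i}).card : ℝ) ≤
      q / (1 - binaryEntropy (1 / 2 + ε / 4)) := by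
  classical
  obtain ⟨hε0, hε2⟩ := hε
  set δ : ℝ := 1 / 2 + ε / 4 with hδ
  -- real-valued joint distribution
  set u : ℝ := ((Fintype.card (Fin n → Bool) : ℝ))⁻¹ with hu
  set w : (Fin n → Bool) → (Fin q → Bool) → ℝ := fun x y => ((Y x) y).toReal with hwdef
  set J : (Fin n → Bool) → (Fin q → Bool) → ℝ := fun x y => u * w x y with hJ
  set pY : (Fin q → Bool) → ℝ := fun y => ∑ x, J x y with hpY
  set cond : (Fin q → Bool) → (Fin n → Bool) → ℝ := fun y x => J x y / pY y with hcond
  have hcardX : ((Fintype.card (Fin n → Bool) : ℝ)) = (2 : ℝ) ^ n := by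
    rw [show Fintype.card (Fin n → Bool) = 2 ^ n by simp [Fintype.card_fun]]; push_cast; ring
  have hcardXpos : (0 : ℝ) < (Fintype.card (Fin n → Bool) : ℝ) := by rw [hcardX]; positivity
  have hupos : 0 < u := by rw [hu]; exact inv_pos.mpr hcardXpos
  have hw0 : ∀ x y, 0 ≤ w x y := fun x y => ENNReal.toReal_nonneg
  have hw1 : ∀ x, ∑ y, w x y = 1 := by
    intro x
    have h1 := (Y x).tsum_coe
    rw [tsum_fintype] at h1
    have h2 := congrArg ENNReal.toReal h1
    rw [ENNReal.toReal_sum (fun y _ => (Y x).apply_ne_top y)] at h2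
    simpa using h2
  have hJ0 : ∀ x y, 0 ≤ J x y := fun x y => mul_nonneg hupos.le (hw0 x y)
  have hJ1 : ∑ x, ∑ y, J x y = 1 := by
    simp only [hJ, ← Finset.mul_sum]
    simp only [hw1, mul_one]
    rw [Finset.sum_const, Finset.card_univ, nsmul_eq_mul, hu]
    field_simp
  have hpY0 : ∀ y, 0 ≤ pY y := fun y => Finset.sum_nonneg fun x _ => hJ0 x y
  have hpY1 : ∑ y, pY y = 1 := by rw [hpY]; rw [Finset.sum_comm]; exact hJ1
  have hJ_zero : ∀ y, pY y = 0 → ∀ x, J x y = 0 := by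
    intro y hy x
    exact (Finset.sum_eq_zero_iff_of_nonneg (fun x _ => hJ0 x y)).mp hy x (Finset.mem_univ x)
  have hcond0 : ∀ y x, 0 ≤ cond y x := fun y x => div_nonneg (hJ0 x y) (hpY0 y)
  have hcond1 : ∀ y, pY y ≠ 0 → ∑ x, cond y x = 1 := by
    intro y hy
    rw [hcond]
    simp only [← Finset.sum_div]
    exact div_self hy
  have hJ_eq : ∀ x y, J x y = pY y * cond y x := by
    intro x y
    rcases eq_or_ne (pY y) 0 with h | h
    · rw [h, zero_mul]; exact hJ_zero y h x
    · rw [hcond]; field_simp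
  -- entropy of the joint distribution
  set HJ : ℝ := ∑ x, ∑ y, Real.negMulLog (J x y) with hHJ
  have factA : (n : ℝ) * Real.log 2 ≤ HJ := by
    have hchain := ent_chain (β := Fin q → Bool) (fun _ : Fin n → Bool => u) w (fun x _ => hw1 x)
    have hHJ' : HJ = ent (fun _ : Fin n → Bool => u) + ∑ x, u * ent (w x) := by
      rw [hHJ]; simp only [hJ]; exact hchain
    have hentu : ent (fun _ : Fin n → Bool => u) = (n : ℝ) * Real.log 2 := by
      simp only [ent, Finset.sum_const, Finset.card_univ, nsmul_eq_mul]
      rw [hu, Real.negMulLog, Real.log_inv, hcardX, Real.log_pow]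
      have h2 : ((2 : ℝ)) ^ n ≠ 0 := by positivity
      field_simp
    have hpos : 0 ≤ ∑ x, u * ent (w x) :=
      Finset.sum_nonneg fun x _ => mul_nonneg hupos.le (ent_nonneg (hw0 x) (hw1 x))
    rw [hHJ', hentu]
    linarith
  have factB : HJ = ent pY + ∑ y, pY y * ent (cond y) := by
    rw [hHJ]
    calc ∑ x, ∑ y, Real.negMulLog (J x y)
        = ∑ y, ∑ x, Real.negMulLog (pY y * cond y x) := by
          rw [Finset.sum_comm]
          exact Finset.sum_congr rfl fun y _ => Finset.sum_congr rfl fun x _ => by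
            rw [← hJ_eq]
      _ = ent pY + ∑ y, pY y * ent (cond y) := ent_chain pY cond hcond1
  have factC : ent pY ≤ (q : ℝ) * Real.log 2 := by
    have h := ent_le_log_card hpY0 hpY1
    have hcardY : ((Fintype.card (Fin q → Bool) : ℝ)) = (2 : ℝ) ^ q := by
      rw [show Fintype.card (Fin q → Bool) = 2 ^ q by simp [Fintype.card_fun]]; push_cast; ring
    rwa [hcardY, Real.log_pow] at h
  have factD : ∑ y, pY y * ent (cond y) ≤ ∑ i : Fin n, ∑ y, pY y * ent (marg (cond y) i) := by
    have step : ∀ y, pY y * ent (cond y) ≤ ∑ i : Fin n, pY y * ent (marg (cond y) i) := by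
      intro y
      rcases eq_or_ne (pY y) 0 with h | h
      · simp [h]
      · rw [← Finset.mul_sum]
        exact mul_le_mul_of_nonneg_left (ent_subadd (hcond0 y) (hcond1 y h)) (hpY0 y)
    calc ∑ y, pY y * ent (cond y)
        ≤ ∑ y, ∑ i : Fin n, pY y * ent (marg (cond y) i) :=
          Finset.sum_le_sum fun y _ => step y
      _ = ∑ i : Fin n, ∑ y, pY y * ent (marg (cond y) i) := Finset.sum_comm
  have factE1 : ∀ i : Fin n, ∑ y, pY y * ent (marg (cond y) i) ≤ Real.log 2 := by
    intro i
    have step : ∀ y, pY y * ent (marg (cond y) i) ≤ pY y * Real.log 2 := by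
      intro y
      rcases eq_or_ne (pY y) 0 with h | h
      · simp [h]
      · refine mul_le_mul_of_nonneg_left ?_ (hpY0 y)
        have h2 := ent_le_log_card (marg_nonneg (hcond0 y) i)
          (by rw [sum_marg]; exact hcond1 y h)
        simpa [Fintype.card_bool] using h2
    calc ∑ y, pY y * ent (marg (cond y) i) ≤ ∑ y, pY y * Real.log 2 :=
          Finset.sum_le_sum fun y _ => step y
      _ = Real.log 2 := by rw [← Finset.sum_mul, hpY1, one_mul]
  have factE2 : ∀ i : Fin n,
      (∃ f : (Fin q → Bool) → Bool,
          ENNReal.ofReal δ ≤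
            (((PMF.uniformOfFintype (Fin n → Bool)).bind fun x =>
                (Y x).map fun y => (x, y))).toOuterMeasure {t | f t.2 = t.1 i}) →
      ∑ y, pY y * ent (marg (cond y) i) ≤ Real.binEntropy δ := by
    rintro i ⟨f, hf⟩
    -- success probability in real form
    set Pc : ℝ := ∑ x, ∑ y, (if f y = x i then J x y else 0) with hPcdef
    have hPc_le : Pc ≤ 1 := by
      rw [hPcdef, ← hJ1]
      refine Finset.sum_le_sum fun x _ => Finset.sum_le_sum fun y _ => ?_
      split_ifs
      exacts [le_refl _, hJ0 x y]
    have hδPc : δ ≤ Pc := by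
      rw [PMF.toOuterMeasure_bind_apply, tsum_fintype] at hf
      have hterm : ∀ x : Fin n → Bool,
          (PMF.uniformOfFintype (Fin n → Bool)) x *
            ((Y x).map fun y => (x, y)).toOuterMeasure {t | f t.2 = t.1 i}
          = (Fintype.card (Fin n → Bool) : ℝ≥0∞)⁻¹ *
              (Y x).toOuterMeasure {y | f y = x i} := by
        intro x
        rw [PMF.uniformOfFintype_apply, PMF.toOuterMeasure_map_apply]
        congr 1
      rw [Finset.sum_congr rfl (fun x _ => hterm x)] at hf
      have hfin : ∀ (x : Fin n → Bool) (s : Set (Fin q → Bool)),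
          (Y x).toOuterMeasure s ≠ ⊤ := by
        intro x s
        rw [PMF.toOuterMeasure_apply_fintype]
        refine ENNReal.sum_ne_top.mpr fun y _ => ?_
        exact ne_top_of_le_ne_top ((Y x).apply_ne_top y) (Set.indicator_le_self _ _ y)
      have htermfin : ∀ x : Fin n → Bool,
          (Fintype.card (Fin n → Bool) : ℝ≥0∞)⁻¹ *
            (Y x).toOuterMeasure {y | f y = x i} ≠ ⊤ :=
        fun x => ENNReal.mul_ne_top (by simp) (hfin x _)
      have hMne : (∑ x, (Fintype.card (Fin n → Bool) : ℝ≥0∞)⁻¹ *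
          (Y x).toOuterMeasure {y | f y = x i}) ≠ ⊤ :=
        ENNReal.sum_ne_top.mpr fun x _ => htermfin x
      have hδM := (ENNReal.ofReal_le_iff_le_toReal hMne).mp hf
      refine hδM.trans_eq ?_
      rw [ENNReal.toReal_sum (fun x _ => htermfin x)]
      rw [hPcdef]
      refine Finset.sum_congr rfl fun x _ => ?_
      rw [ENNReal.toReal_mul, ENNReal.toReal_inv, ENNReal.toReal_natCast]
      rw [PMF.toOuterMeasure_apply_fintype,
        ENNReal.toReal_sum (fun y _ => ne_top_of_le_ne_top ((Y x).apply_ne_top y)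
          (Set.indicator_le_self _ _ y))]
      rw [← hu, Finset.mul_sum]
      refine Finset.sum_congr rfl fun y _ => ?_
      rw [Set.indicator_apply, apply_ite ENNReal.toReal, ENNReal.toReal_zero]
      simp only [Set.mem_setOf_eq, hJ, hwdef, mul_ite, mul_zero]
    -- conditional error probabilities
    set e : (Fin q → Bool) → ℝ := fun y => marg (cond y) i (!(f y)) with hedef
    have hcondzero : ∀ y, pY y = 0 → cond y = fun _ => 0 := by
      intro y hy
      funext x
      rw [hcond]
      simp [hy]
    have he0 : ∀ y, 0 ≤ e y := fun y => marg_nonneg (hcond0 y) i _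
    have he1 : ∀ y, e y ≤ 1 := by
      intro y
      rcases eq_or_ne (pY y) 0 with h | h
      · rw [hedef]
        simp only [marg, hcondzero y h]
        simp
      · calc e y ≤ ∑ b, marg (cond y) i b :=
              Finset.single_le_sum (fun b _ => marg_nonneg (hcond0 y) i b) (Finset.mem_univ _)
          _ = 1 := by rw [sum_marg]; exact hcond1 y h
    have hent : ∀ y, ent (marg (cond y) i) = Real.binEntropy (e y) := by
      intro y
      rcases eq_or_ne (pY y) 0 with h | h
      · have hm : ∀ b, marg (cond y) i b = 0 := by
          intro b
          simp only [marg, hcondzero y h]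
          simp
        have he : e y = 0 := hm _
        simp [ent, Fintype.sum_bool, hm, he]
      · have hsum : marg (cond y) i true + marg (cond y) i false = 1 := by
          have := sum_marg (cond y) i
          rw [hcond1 y h] at this
          rw [← this, Fintype.sum_bool]
        cases hfy : f y
        · have he : e y = marg (cond y) i true := by simp [hedef, hfy]
          have h1e : (1:ℝ) - marg (cond y) i true = marg (cond y) i false := by linarith
          rw [Real.binEntropy_eq_negMulLog_add_negMulLog_one_sub, he, h1e, ent,
            Fintype.sum_bool]
        · have he : e y = marg (cond y) i false := by simp [hedef, hfy]
          have h1e : (1:ℝ) - marg (cond y) i false = marg (cond y) i true := by linarith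
          rw [Real.binEntropy_eq_negMulLog_add_negMulLog_one_sub, he, h1e, ent,
            Fintype.sum_bool]
          ring
    -- average error probability
    have hPe : ∑ y, pY y * e y = 1 - Pc := by
      have hterm : ∀ y, pY y * e y = ∑ x, (if x i = !(f y) then J x y else 0) := by
        intro y
        rw [hedef]
        simp only [marg, Finset.mul_sum, ← Finset.sum_filter]
        exact Finset.sum_congr rfl fun x _ => (hJ_eq x y).symm
      rw [Finset.sum_congr rfl fun y _ => hterm y]
      rw [hPcdef, ← hJ1, Finset.sum_comm (f := fun x y => if f y = x i then J x y else 0)]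
      rw [Finset.sum_comm (f := fun x y => J x y), ← Finset.sum_sub_distrib]
      refine Finset.sum_congr rfl fun y _ => ?_
      rw [← Finset.sum_sub_distrib]
      refine Finset.sum_congr rfl fun x _ => ?_
      cases hxy : x i <;> cases hfy : f y <;> simp [hxy, hfy]
    have hPe_le : ∑ y, pY y * e y ≤ 1 - δ := by rw [hPe]; linarith
    have hPe0 : 0 ≤ ∑ y, pY y * e y :=
      Finset.sum_nonneg fun y _ => mul_nonneg (hpY0 y) (he0 y)
    -- Jensen
    have hjen := (Real.strictConcave_binEntropy.concaveOn).le_map_sum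
      (t := Finset.univ) (w := pY) (p := e) (fun y _ => hpY0 y) hpY1
      (fun y _ => Set.mem_Icc.mpr ⟨he0 y, he1 y⟩)
    simp only [smul_eq_mul] at hjen
    have hδhalf : 1 - δ ≤ 2⁻¹ := by rw [hδ]; norm_num; linarith
    have hmono := Real.binEntropy_strictMonoOn.monotoneOn
      (a := ∑ y, pY y * e y) (b := 1 - δ)
      (Set.mem_Icc.mpr ⟨hPe0, le_trans hPe_le hδhalf⟩)
      (Set.mem_Icc.mpr ⟨by rw [hδ]; linarith, hδhalf⟩) hPe_le
    calc ∑ y, pY y * ent (marg (cond y) i)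
        = ∑ y, pY y * Real.binEntropy (e y) :=
          Finset.sum_congr rfl fun y _ => by rw [hent y]
      _ ≤ Real.binEntropy (∑ y, pY y * e y) := hjen
      _ ≤ Real.binEntropy (1 - δ) := hmono
      _ = Real.binEntropy δ := Real.binEntropy_one_sub δ
  -- put it together
  set S := Finset.univ.filter fun i : Fin n =>
      ∃ f : (Fin q → Bool) → Bool,
        ENNReal.ofReal δ ≤
          (((PMF.uniformOfFintype (Fin n → Bool)).bind fun x =>
              (Y x).map fun y => (x, y))).toOuterMeasure {t | f t.2 = t.1 i} with hS
  have hmemS : ∀ i ∈ S, ∃ f : (Fin q → Bool) → Bool,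
      ENNReal.ofReal δ ≤
        (((PMF.uniformOfFintype (Fin n → Bool)).bind fun x =>
            (Y x).map fun y => (x, y))).toOuterMeasure {t | f t.2 = t.1 i} := by
    intro i hi
    rw [hS] at hi
    exact (Finset.mem_filter.mp hi).2
  set k : ℕ := S.card with hk
  have hkn : k ≤ n := by
    calc k ≤ (Finset.univ : Finset (Fin n)).card := Finset.card_le_card (Finset.filter_subset _ _)
      _ = n := by simp
  set B : ℝ := Real.binEntropy δ with hB
  have hBpos : 0 ≤ B := Real.binEntropy_nonneg (by rw [hδ]; linarith) (by rw [hδ]; linarith)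
  have hBlt : B < Real.log 2 := by
    rw [hB]
    refine Real.binEntropy_lt_log_two.mpr ?_
    rw [hδ]
    intro hcon
    rw [show (2:ℝ)⁻¹ = 1/2 by norm_num] at hcon
    linarith
  have key : (n : ℝ) * Real.log 2 ≤ (q : ℝ) * Real.log 2 + (k : ℝ) * B
      + ((n : ℝ) - k) * Real.log 2 := by
    have split : ∑ i : Fin n, ∑ y, pY y * ent (marg (cond y) i)
        ≤ (k : ℝ) * B + ((n : ℝ) - k) * Real.log 2 := by
      rw [← Finset.sum_filter_add_sum_filter_not Finset.univ
        (fun i : Fin n => i ∈ S) (fun i => ∑ y, pY y * ent (marg (cond y) i))]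
      have hSeq : Finset.univ.filter (fun i : Fin n => i ∈ S) = S := by
        ext i; simp
      have h1 : ∑ i ∈ Finset.univ.filter (fun i : Fin n => i ∈ S),
          (∑ y, pY y * ent (marg (cond y) i)) ≤ (k : ℝ) * B := by
        rw [hSeq]
        calc ∑ i ∈ S, (∑ y, pY y * ent (marg (cond y) i)) ≤ ∑ i ∈ S, B :=
              Finset.sum_le_sum fun i hi => factE2 i (hmemS i hi)
          _ = (k : ℝ) * B := by rw [Finset.sum_const, hk, nsmul_eq_mul]
      have h2 : ∑ i ∈ Finset.univ.filter (fun i : Fin n => i ∉ S),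
          (∑ y, pY y * ent (marg (cond y) i)) ≤ ((n : ℝ) - k) * Real.log 2 := by
        have hcard : (Finset.univ.filter (fun i : Fin n => i ∉ S)).card = n - k := by
          have htot := Finset.card_filter_add_card_filter_not
            (s := (Finset.univ : Finset (Fin n))) (p := fun i => i ∈ S)
          rw [hSeq] at htot
          simp only [Finset.card_univ, Fintype.card_fin] at htot
          omega
        calc ∑ i ∈ Finset.univ.filter (fun i : Fin n => i ∉ S),
              (∑ y, pY y * ent (marg (cond y) i))
            ≤ ∑ i ∈ Finset.univ.filter (fun i : Fin n => i ∉ S), Real.log 2 :=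
              Finset.sum_le_sum fun i _ => factE1 i
          _ = ((n : ℝ) - k) * Real.log 2 := by
              rw [Finset.sum_const, nsmul_eq_mul, hcard]
              congr 1
              push_cast [Nat.cast_sub hkn]
              ring
      linarith
    calc (n : ℝ) * Real.log 2 ≤ HJ := factA
      _ = ent pY + ∑ y, pY y * ent (cond y) := factB
      _ ≤ (q : ℝ) * Real.log 2 + ∑ i : Fin n, ∑ y, pY y * ent (marg (cond y) i) := by
          linarith [factC, factD]
      _ ≤ (q : ℝ) * Real.log 2 + ((k : ℝ) * B + ((n : ℝ) - k) * Real.log 2) := by linarith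
      _ = (q : ℝ) * Real.log 2 + (k : ℝ) * B + ((n : ℝ) - k) * Real.log 2 := by ring
  -- final algebra
  have hkB : (k : ℝ) * (Real.log 2 - B) ≤ (q : ℝ) * Real.log 2 := by linarith
  have hlog2 : (0 : ℝ) < Real.log 2 := Real.log_pos (by norm_num)
  have hden : 0 < 1 - binaryEntropy δ := by
    rw [binaryEntropy_eq, sub_pos, div_lt_one hlog2]
    exact hBlt
  show (k : ℝ) ≤ (q : ℝ) / (1 - binaryEntropy δ)
  rw [le_div_iff₀ hden, binaryEntropy_eq]
  have heq : (k : ℝ) * (1 - Real.binEntropy δ / Real.log 2)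
      = (k : ℝ) * (Real.log 2 - B) / Real.log 2 := by
    field_simp [hB]
    rw [hB]
  rw [heq, div_le_iff₀ hlog2]
  exact hkB
end

section
/- Hadamard decoding identity for the padded Hadamard code: fix integers t, n ≥ 1 and 0 ≤ i ≤ n−1. If a ∈ {0, 1, …, 2^{tn} − 2^{ti} − 1} is good for i, then for every x ∈ {0,1}^n, f_{x^{(t)}}(a) ⊕ f_{x^{(t)}}(a + 2^{ti}) = x_i. -/
open scoped Classical

/-- `hadF tn z a` is the Hadamard-code bit `⊕_{j<tn} a_j·z_j`, where `a_j` are the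
binary digits of `a`: the inner product mod 2 of the digit vector of `a` with `z`. -/
def hadF (tn : ℕ) (z : ℕ → Bool) (a : ℕ) : Bool :=
  decide ((((Finset.range tn).filter fun j => a.testBit j && z j).card) % 2 = 1)

/-- `paddedMsg t n x` is the string `x^(t) ∈ {0,1}^(tn)`: each bit of `x` followed by
`t − 1` zeros, so that bit `t·i` equals `x i` and all other bits are `0` (viewed as a
function on `ℕ`, zero outside the relevant range). -/
def paddedMsg (t n : ℕ) (x : Fin n → Bool) : ℕ → Bool := fun j =>
  if h : j % t = 0 ∧ j / t < n then x ⟨j / t, h.2⟩ else false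

/-- `a` is *good* for `i` if it is **not** the case that all binary digits `a_j` with
`t·i ≤ j ≤ t·(i+1) − 1` equal `1`. -/
def goodFor (t i a : ℕ) : Prop :=
  ¬ ∀ j ∈ Finset.Ico (t * i) (t * (i + 1)), a.testBit j = true

lemma aux_testBit_shift (a m j : ℕ) (h : m ≤ j) :
    a.testBit j = (a / 2 ^ m).testBit (j - m) := by
  rw [Nat.testBit_eq_decide_div_mod_eq, Nat.testBit_eq_decide_div_mod_eq, Nat.div_div_eq_div_mul, ← pow_add]
  have hm : m + (j - m) = j := by omega
  rw [hm]

lemma aux_testBit_add_pow_lt (a m j : ℕ) (h : j < m) :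
    (a + 2 ^ m).testBit j = a.testBit j := by
  rw [Nat.testBit_eq_decide_div_mod_eq, Nat.testBit_eq_decide_div_mod_eq]
  have h2 : (2:ℕ) ^ m = 2 ^ j * 2 ^ (m - j) := by rw [← pow_add]; congr 1; omega
  rw [h2, Nat.add_mul_div_left _ _ ((by positivity))]
  have he : (2:ℕ) ^ (m - j) % 2 = 0 := by
    have : m - j = (m - j - 1) + 1 := by omega
    rw [this, pow_succ, Nat.mul_mod_left]
  rw [Nat.add_mod, he]
  simp

lemma aux_succ_div_pow (hi t : ℕ) (h : ∃ k, k < t ∧ hi.testBit k = false) :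
    (hi + 1) / 2 ^ t = hi / 2 ^ t := by
  obtain ⟨k, hk, hfk⟩ := h
  have hpos : 0 < (2:ℕ) ^ t := (by positivity)
  have hr : hi % 2 ^ t + 1 < 2 ^ t := by
    have hlt : hi % 2 ^ t < 2 ^ t := Nat.mod_lt _ hpos
    rcases Nat.lt_or_ge (hi % 2 ^ t + 1) (2 ^ t) with h | h
    · exact h
    · exfalso
      have heq : hi % 2 ^ t = 2 ^ t - 1 := by omega
      have hb : hi.testBit k = (hi % 2 ^ t).testBit k := by
        rw [Nat.testBit_mod_two_pow, decide_eq_true hk, Bool.true_and]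
      rw [hb, heq, Nat.testBit_two_pow_sub_one, decide_eq_true hk] at hfk
      simp at hfk
  calc (hi + 1) / 2 ^ t
      = (2 ^ t * (hi / 2 ^ t) + (hi % 2 ^ t + 1)) / 2 ^ t := by
        rw [← add_assoc, Nat.div_add_mod]
    _ = hi / 2 ^ t + (hi % 2 ^ t + 1) / 2 ^ t := Nat.mul_add_div hpos _ _
    _ = hi / 2 ^ t := by rw [Nat.div_eq_of_lt hr, add_zero]

/-- Hadamard decoding identity for the padded Hadamard code: if
`a ∈ {0, …, 2^(tn) − 2^(ti) − 1}` is good for `i`, then for every `x ∈ {0,1}^n`,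
`f_{x^(t)}(a) ⊕ f_{x^(t)}(a + 2^(ti)) = x i`. -/
theorem padded_hadamard_decoding_identity
    (t n : ℕ) (ht : 1 ≤ t) (hn : 1 ≤ n) (i : Fin n) (a : ℕ)
    (ha : a + 2 ^ (t * (i : ℕ)) < 2 ^ (t * n)) (hgood : goodFor t (i : ℕ) a)
    (x : Fin n → Bool) :
    xor (hadF (t * n) (paddedMsg t n x) a)
        (hadF (t * n) (paddedMsg t n x) (a + 2 ^ (t * (i : ℕ)))) = x i := by
  set m := t * (i : ℕ) with hm
  set z := paddedMsg t n x with hz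
  set b := a + 2 ^ m with hb
  have htpos : 0 < t := ht
  have hmt : m + t ≤ t * n := by
    have : t * ((i : ℕ) + 1) ≤ t * n := Nat.mul_le_mul_left t i.isLt
    rw [Nat.mul_add, Nat.mul_one] at this
    exact this
  have hmS : m ∈ Finset.range (t * n) := Finset.mem_range.mpr (by omega)
  -- z at m equals x i
  have hzm : z m = x i := by
    have h1 : m % t = 0 := Nat.mul_mod_right t _
    have h2 : m / t = (i : ℕ) := Nat.mul_div_cancel_left _ htpos
    simp only [hz, paddedMsg]
    rw [dif_pos (by rw [h2]; exact ⟨h1, i.isLt⟩)]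
    congr 1
    exact Fin.ext h2
  -- z vanishes strictly between m and m + t
  have hzmid : ∀ j, m < j → j < m + t → z j = false := by
    intro j hj1 hj2
    have hmod : ¬ (j % t = 0 ∧ j / t < n) := by
      rintro ⟨hd, -⟩
      obtain ⟨u, hu⟩ : t ∣ j := Nat.dvd_of_mod_eq_zero hd
      have h1 : (i : ℕ) < u := by
        have : t * (i : ℕ) < t * u := by omega
        exact Nat.lt_of_mul_lt_mul_left this
      have h2 : u < (i : ℕ) + 1 := by
        have : t * u < t * ((i : ℕ) + 1) := by
          rw [Nat.mul_add, Nat.mul_one]; omega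
        exact Nat.lt_of_mul_lt_mul_left this
      omega
    simp only [hz, paddedMsg]
    rw [dif_neg hmod]
  -- goodness in terms of hi := a / 2 ^ m
  have hgood' : ∃ k, k < t ∧ (a / 2 ^ m).testBit k = false := by
    rw [goodFor] at hgood
    push_neg at hgood
    obtain ⟨j, hjmem, hjf⟩ := hgood
    rw [Finset.mem_Ico] at hjmem
    have hj1 : m ≤ j := hjmem.1
    have hj2 : j < m + t := by
      have := hjmem.2
      rw [Nat.mul_add, Nat.mul_one] at this
      exact this
    refine ⟨j - m, by omega, ?_⟩
    rw [← aux_testBit_shift a m j hj1]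
    revert hjf
    cases a.testBit j <;> simp
  -- bit change facts
  have hdivb : b / 2 ^ m = a / 2 ^ m + 1 := Nat.add_div_right a ((by positivity))
  have hbit_lo : ∀ j, j < m → b.testBit j = a.testBit j := fun j hj => aux_testBit_add_pow_lt a m j hj
  have hbit_m : b.testBit m = ! a.testBit m := by
    rw [aux_testBit_shift b m m le_rfl, aux_testBit_shift a m m le_rfl, hdivb, Nat.sub_self]
    rw [Nat.testBit_eq_decide_div_mod_eq, Nat.testBit_eq_decide_div_mod_eq]
    rcases Nat.mod_two_eq_zero_or_one (a / 2 ^ m) with h | h <;>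
      · simp [h, pow_zero, Nat.div_one]
        omega
  have hbit_hi : ∀ j, m + t ≤ j → b.testBit j = a.testBit j := by
    intro j hj
    rw [aux_testBit_shift b m j (by omega), aux_testBit_shift a m j (by omega), hdivb]
    rw [aux_testBit_shift (a / 2 ^ m + 1) t (j - m) (by omega),
        aux_testBit_shift (a / 2 ^ m) t (j - m) (by omega),
        aux_succ_div_pow _ _ hgood']
  -- predicates agree off m
  have hpe : ∀ j ∈ (Finset.range (t * n)).erase m,
      (b.testBit j && z j) = (a.testBit j && z j) := by
    intro j hj
    have hjne : j ≠ m := (Finset.mem_erase.mp hj).1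
    rcases Nat.lt_or_ge j m with h | h
    · rw [hbit_lo j h]
    · rcases Nat.lt_or_ge j (m + t) with h2 | h2
      · have hjm : m < j := by omega
        rw [hzmid j hjm h2]
        simp
      · rw [hbit_hi j h2]
  -- card decomposition
  have hcard : ∀ w : ℕ, (∀ j ∈ (Finset.range (t * n)).erase m,
        (w.testBit j && z j) = (a.testBit j && z j)) →
      ((Finset.range (t * n)).filter fun j => w.testBit j && z j).card
        = (((Finset.range (t * n)).erase m).filter fun j => a.testBit j && z j).card
          + (if (w.testBit m && z m) = true then 1 else 0) := by
    intro w hw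
    conv_lhs => rw [← Finset.insert_erase hmS]
    rw [Finset.filter_insert]
    have hfe : ((Finset.range (t * n)).erase m).filter (fun j => w.testBit j && z j)
        = ((Finset.range (t * n)).erase m).filter (fun j => a.testBit j && z j) :=
      Finset.filter_congr (by intro j hj; rw [hw j hj])
    split
    · rw [Finset.card_insert_of_notMem (by simp), hfe]
    · rw [hfe]; omega
  have hca := hcard a (by intro j hj; rfl)
  have hcb := hcard b hpe
  set c := (((Finset.range (t * n)).erase m).filter fun j => a.testBit j && z j).card with hc
  rw [hadF, hadF, hca, hcb, hbit_m, hzm]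
  cases hxi : x i <;> cases hai : a.testBit m <;>
    · simp only [Bool.and_true, Bool.and_false, Bool.not_true, Bool.not_false,
        if_true, if_false]
      rcases Nat.mod_two_eq_zero_or_one c with h | h <;>
        simp [Nat.add_mod, h]
end

section
/- The padded Hadamard code locally decodes against prefix-deletion (type-1) errors: fix integers t ≥ 2, n ≥ 1, δ ∈ [0,1], x ∈ {0,1}^n, an index 0 ≤ i ≤ n−1, and an integer e with 0 ≤ e ≤ δ·2^{tn}. Let y : {0, …, 2^{tn} − 1} → {0,1} be any string such that y(a) = f_{x^{(t)}}(a + e) whenever a + e ≤ 2^{tn} − 1 (the remaining values of y are arbitrary). Then, for a chosen uniformly at random from {0, 1, …, 2^{tn} − 2^{ti} − 1}, Pr[y(a) ⊕ y(a + 2^{ti}) = x_i] ≥ 1 − δ − 2^{−t+1}. In particular, the encoding x ↦ (f_{x^{(t)}}(a))_{a=0}^{2^{tn}−1} of length m = 2^{tn} together with the 2-query decoder outputting y(a) ⊕ y(a + 2^{ti}) is a (2, δ, 1/2 − δ − 2^{−t+1}) locally decodable code for errors that delete a prefix of at most δ·2^{tn} symbols of the codeword and append arbitrary symbols at the end. 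-/
open scoped Classical

lemma testBit_div_pow (b m k : ℕ) : (b / 2 ^ m).testBit k = b.testBit (m + k) := by
  rw [← Nat.shiftRight_eq_div_pow, Nat.testBit_shiftRight]

lemma hadF_padded (t n : ℕ) (ht : 1 ≤ t) (x : Fin n → Bool) (b : ℕ) :
    hadF (t * n) (paddedMsg t n x) b =
      decide ((((Finset.range n).filter fun k =>
        b.testBit (t * k) && paddedMsg t n x (t * k)).card) % 2 = 1) := by
  unfold hadF
  have hc : ((Finset.range (t * n)).filter fun j => b.testBit j && paddedMsg t n x j).card
      = ((Finset.range n).filter fun k => b.testBit (t * k) && paddedMsg t n x (t * k)).card := by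
    apply Finset.card_nbij' (fun j => j / t) (fun k => t * k)
    · intro j hj
      simp only [Finset.mem_coe, Finset.mem_filter, Finset.mem_range, Bool.and_eq_true] at hj ⊢
      obtain ⟨hjlt, hbit, hz⟩ := hj
      have hz' := hz
      unfold paddedMsg at hz'
      split at hz'
      · rename_i h
        have hjj : t * (j / t) = j := Nat.mul_div_cancel' (Nat.dvd_of_mod_eq_zero h.1)
        exact ⟨h.2, by rw [hjj]; exact ⟨hbit, hz⟩⟩
      · simp at hz'
    · intro k hk
      simp only [Finset.mem_coe, Finset.mem_filter, Finset.mem_range, Bool.and_eq_true] at hk ⊢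
      exact ⟨Nat.mul_lt_mul_left (by omega) |>.mpr hk.1, hk.2⟩
    · intro j hj
      simp only [Finset.mem_coe, Finset.mem_filter, Finset.mem_range, Bool.and_eq_true] at hj
      obtain ⟨hjlt, hbit, hz⟩ := hj
      have hz' := hz
      unfold paddedMsg at hz'
      split at hz'
      · rename_i h
        exact Nat.mul_div_cancel' (Nat.dvd_of_mod_eq_zero h.1)
      · simp at hz'
    · intro k hk
      exact Nat.mul_div_cancel_left k (by omega)
  rw [hc]


lemma mid_lt_of_good (t i b : ℕ) (hg : goodFor t i b) :
    b / 2 ^ (t * i) % 2 ^ t + 2 ≤ 2 ^ t := by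
  have hlt : b / 2 ^ (t * i) % 2 ^ t < 2 ^ t := Nat.mod_lt _ (by positivity)
  have hne : b / 2 ^ (t * i) % 2 ^ t ≠ 2 ^ t - 1 := by
    intro hEq
    unfold goodFor at hg
    push_neg at hg
    obtain ⟨j, hjmem, hjbit⟩ := hg
    rw [Finset.mem_Ico] at hjmem
    have hmt : t * (i + 1) = t * i + t := by ring
    have hj2 : j < t * i + t := by omega
    have h1 : (b / 2 ^ (t * i) % 2 ^ t).testBit (j - t * i) = b.testBit j := by
      rw [Nat.testBit_mod_two_pow, testBit_div_pow]
      have h2 : t * i + (j - t * i) = j := by omega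
      rw [h2]
      simp [show j - t * i < t by omega]
    rw [hEq, Nat.testBit_two_pow_sub_one] at h1
    simp [show j - t * i < t by omega] at h1
    exact hjbit h1
  omega

lemma bits_of_good (t i b : ℕ) (hg : goodFor t i b) :
    (∀ j, j < t * i ∨ t * i + t ≤ j →
      (b + 2 ^ (t * i)).testBit j = b.testBit j) ∧
    (b + 2 ^ (t * i)).testBit (t * i) = ! b.testBit (t * i) := by
  have hmid := mid_lt_of_good t i b hg
  have hBpos : 0 < 2 ^ (t * i) := by positivity
  have hPpos : 0 < 2 ^ (t * i + t) := by positivity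
  constructor
  · intro j hj
    rcases hj with hj | hj
    · calc (b + 2 ^ (t * i)).testBit j
          = (decide (j < t * i) && (b + 2 ^ (t * i)).testBit j) := by simp [hj]
        _ = ((b + 2 ^ (t * i)) % 2 ^ (t * i)).testBit j := (Nat.testBit_mod_two_pow _ _ _).symm
        _ = (b % 2 ^ (t * i)).testBit j := by rw [Nat.add_mod_right]
        _ = (decide (j < t * i) && b.testBit j) := Nat.testBit_mod_two_pow _ _ _
        _ = b.testBit j := by simp [hj]
    · -- high bits
      have hdiv : (b + 2 ^ (t * i)) / 2 ^ (t * i + t) = b / 2 ^ (t * i + t) := by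
        have hP : 2 ^ (t * i + t) = 2 ^ (t * i) * 2 ^ t := pow_add 2 _ _
        have hrdiv : b % 2 ^ (t * i + t) / 2 ^ (t * i) = b / 2 ^ (t * i) % 2 ^ t := by
          rw [hP]; exact Nat.mod_mul_right_div_self _ _ _
        have hrdm := Nat.div_add_mod (b % 2 ^ (t * i + t)) (2 ^ (t * i))
        have hrmod : b % 2 ^ (t * i + t) % 2 ^ (t * i) < 2 ^ (t * i) := Nat.mod_lt _ hBpos
        have hlt : b % 2 ^ (t * i + t) + 2 ^ (t * i) < 2 ^ (t * i + t) := by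
          have h1 : b % 2 ^ (t * i + t) + 2 ^ (t * i)
              < 2 ^ (t * i) * (b / 2 ^ (t * i) % 2 ^ t + 2) := by
            rw [Nat.mul_add]
            have := hrdiv ▸ hrdm
            omega
          calc b % 2 ^ (t * i + t) + 2 ^ (t * i)
              < 2 ^ (t * i) * (b / 2 ^ (t * i) % 2 ^ t + 2) := h1
            _ ≤ 2 ^ (t * i) * 2 ^ t := Nat.mul_le_mul_left _ hmid
            _ = 2 ^ (t * i + t) := (pow_add 2 _ _).symm
        have hdm := Nat.div_add_mod b (2 ^ (t * i + t))
        have hsplit : b + 2 ^ (t * i)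
            = 2 ^ (t * i + t) * (b / 2 ^ (t * i + t)) + (b % 2 ^ (t * i + t) + 2 ^ (t * i)) := by
          omega
        rw [hsplit, Nat.mul_add_div hPpos, Nat.div_eq_of_lt hlt, add_zero]
      have e1 : t * i + t + (j - (t * i + t)) = j := by omega
      rw [← e1, ← testBit_div_pow, ← testBit_div_pow, hdiv]
  · rw [Nat.testBit_eq_decide_div_mod_eq, Nat.testBit_eq_decide_div_mod_eq, Nat.add_div_right _ hBpos]
    rcases Nat.mod_two_eq_zero_or_one (b / 2 ^ (t * i)) with h | h <;>
      simp [Nat.add_mod, h]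

lemma parity_xor (c d : ℕ) (h : c + 1 = d ∨ d + 1 = c) :
    xor (decide (c % 2 = 1)) (decide (d % 2 = 1)) = true := by
  rcases h with h | h <;> subst h <;>
    [rcases Nat.mod_two_eq_zero_or_one c with h | h;
     rcases Nat.mod_two_eq_zero_or_one d with h | h] <;>
    simp [Nat.add_mod, h]

lemma xor_hadF (t n : ℕ) (ht : 1 ≤ t) (x : Fin n → Bool) (i : Fin n) (b : ℕ)
    (hg : goodFor t (i : ℕ) b) :
    xor (hadF (t * n) (paddedMsg t n x) b)
        (hadF (t * n) (paddedMsg t n x) (b + 2 ^ (t * (i : ℕ)))) = x i := by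
  obtain ⟨hsame, hflip⟩ := bits_of_good t (i : ℕ) b hg
  rw [hadF_padded t n ht, hadF_padded t n ht]
  have hz : paddedMsg t n x (t * (i : ℕ)) = x i := by
    unfold paddedMsg
    have h1 : t * (i : ℕ) % t = 0 := Nat.mul_mod_right t _
    have h2 : t * (i : ℕ) / t = (i : ℕ) := Nat.mul_div_cancel_left _ (by omega)
    rw [dif_pos ⟨h1, by rw [h2]; exact i.2⟩]
    exact congrArg x (Fin.ext h2)
  have hsame' : ∀ k, k ≠ (i : ℕ) →
      (b + 2 ^ (t * (i : ℕ))).testBit (t * k) = b.testBit (t * k) := by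
    intro k hk
    apply hsame
    rcases Nat.lt_or_ge k (i : ℕ) with h | h
    · exact Or.inl (Nat.mul_lt_mul_left (by omega) |>.mpr h)
    · right
      have h1 : (i : ℕ) + 1 ≤ k := by omega
      calc t * (i : ℕ) + t = t * ((i : ℕ) + 1) := by ring
        _ ≤ t * k := Nat.mul_le_mul_left t h1
  cases hxi : x i with
  | false =>
    have hfe : Finset.filter
          (fun k => ((b + 2 ^ (t * (i : ℕ))).testBit (t * k) && paddedMsg t n x (t * k)) = true)
          (Finset.range n)
        = Finset.filter (fun k => (b.testBit (t * k) && paddedMsg t n x (t * k)) = true)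
          (Finset.range n) := by
      apply Finset.filter_congr
      intro k _
      by_cases hk : k = (i : ℕ)
      · subst hk; rw [hz, hxi]; simp
      · rw [hsame' k hk]
    rw [hfe]
    simp
  | true =>
    have hmem : (i : ℕ) ∈ Finset.range n := Finset.mem_range.mpr i.2
    have hrange : Finset.range n = insert (i : ℕ) ((Finset.range n).erase (i : ℕ)) :=
      (Finset.insert_erase hmem).symm
    have hfe : Finset.filter
          (fun k => ((b + 2 ^ (t * (i : ℕ))).testBit (t * k) && paddedMsg t n x (t * k)) = true)
          ((Finset.range n).erase (i : ℕ))
        = Finset.filter (fun k => (b.testBit (t * k) && paddedMsg t n x (t * k)) = true)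
          ((Finset.range n).erase (i : ℕ)) := by
      apply Finset.filter_congr
      intro k hk
      rw [hsame' k (Finset.ne_of_mem_erase hk)]
    have hnotmem : ∀ p : ℕ → Prop, ∀ hp : DecidablePred p,
        (i : ℕ) ∉ Finset.filter p ((Finset.range n).erase (i : ℕ)) := by
      intro p hp hmem'
      exact absurd (Finset.mem_of_mem_filter _ hmem') (Finset.notMem_erase _ _)
    rw [hrange, Finset.filter_insert, Finset.filter_insert, hfe, hz, hxi]
    set C := (Finset.filter (fun k => (b.testBit (t * k) && paddedMsg t n x (t * k)) = true)
          ((Finset.range n).erase (i : ℕ))).card with hC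
    cases hbi : b.testBit (t * (i : ℕ)) with
    | false =>
      rw [hflip, hbi]
      simp only [Bool.not_false, Bool.false_and, Bool.true_and, if_false, if_true,
        Bool.and_true]
      rw [Finset.card_insert_of_notMem (hnotmem _ _)]
      exact parity_xor _ _ (Or.inl rfl)
    | true =>
      rw [hflip, hbi]
      simp only [Bool.not_true, Bool.false_and, Bool.true_and, if_false, if_true,
        Bool.and_true]
      rw [Finset.card_insert_of_notMem (hnotmem _ _)]
      exact parity_xor _ _ (Or.inr rfl)

lemma mod_eq_of_bad (t i b : ℕ) (hb : ¬ goodFor t i b) :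
    b % 2 ^ (t * i + t) = 2 ^ (t * i) * (2 ^ t - 1) + b % 2 ^ (t * i) := by
  have hball : ∀ j ∈ Finset.Ico (t * i) (t * (i + 1)), b.testBit j = true := not_not.mp hb
  have hmt : t * (i + 1) = t * i + t := by ring
  have hmid : b / 2 ^ (t * i) % 2 ^ t = 2 ^ t - 1 := by
    apply Nat.eq_of_testBit_eq
    intro k
    rw [Nat.testBit_two_pow_sub_one]
    rcases Nat.lt_or_ge k t with hk | hk
    · rw [Nat.testBit_mod_two_pow, testBit_div_pow]
      have := hball (t * i + k) (by rw [Finset.mem_Ico]; omega)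
      simp [hk, this]
    · have h1 : b / 2 ^ (t * i) % 2 ^ t < 2 ^ k :=
        lt_of_lt_of_le (Nat.mod_lt _ (by positivity)) (Nat.pow_le_pow_right (by omega) hk)
      rw [Nat.testBit_lt_two_pow h1]
      simp [Nat.not_lt.mpr hk]
  have hP : 2 ^ (t * i + t) = 2 ^ (t * i) * 2 ^ t := pow_add 2 _ _
  have hrdiv : b % 2 ^ (t * i + t) / 2 ^ (t * i) = b / 2 ^ (t * i) % 2 ^ t := by
    rw [hP]; exact Nat.mod_mul_right_div_self _ _ _
  have hrmod : b % 2 ^ (t * i + t) % 2 ^ (t * i) = b % 2 ^ (t * i) :=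
    Nat.mod_mod_of_dvd _ (by rw [hP]; exact Dvd.intro _ rfl)
  have hrdm := Nat.div_add_mod (b % 2 ^ (t * i + t)) (2 ^ (t * i))
  rw [hrdiv, hrmod, hmid] at hrdm
  omega

lemma bad_count (t i s : ℕ) :
    ((Finset.range (2 ^ (t * i + t) * 2 ^ (t * s) - 2 ^ (t * i))).filter
        fun b => ¬ goodFor t i b).card
      ≤ 2 ^ (t * i) * 2 ^ (t * s) - 2 ^ (t * i) := by
  have hBpos : 0 < 2 ^ (t * i) := by positivity
  have hPpos : 0 < 2 ^ (t * i + t) := by positivity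
  have htpos : 0 < 2 ^ t := by positivity
  have hP : 2 ^ (t * i + t) = 2 ^ (t * i) * 2 ^ t := pow_add 2 _ _
  -- the representation of a bad b
  have hrep : ∀ b, ¬ goodFor t i b →
      b = 2 ^ (t * i + t) * (b / 2 ^ (t * i + t))
          + (2 ^ (t * i) * (2 ^ t - 1) + b % 2 ^ (t * i)) := by
    intro b hb
    have h1 := mod_eq_of_bad t i b hb
    have h2 := Nat.div_add_mod b (2 ^ (t * i + t))
    omega
  have hcard := Finset.card_le_card_of_injOn
    (fun b => b % 2 ^ (t * i) + 2 ^ (t * i) * (b / 2 ^ (t * i + t)))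
    (s := (Finset.range (2 ^ (t * i + t) * 2 ^ (t * s) - 2 ^ (t * i))).filter
        fun b => ¬ goodFor t i b)
    (t := Finset.range (2 ^ (t * i) * 2 ^ (t * s) - 2 ^ (t * i)))
    ?mem ?inj
  · simpa using hcard
  · intro b hb
    rw [Finset.mem_coe, Finset.mem_filter, Finset.mem_range] at hb
    obtain ⟨hblt, hbad⟩ := hb
    rw [Finset.mem_coe, Finset.mem_range]
    -- q + 1 < M
    have hrb := hrep b hbad
    have hq1 : (b / 2 ^ (t * i + t) + 1) * 2 ^ (t * i + t) ≤ b + 2 ^ (t * i) := by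
      have hmb : b % 2 ^ (t * i) < 2 ^ (t * i) := Nat.mod_lt _ hBpos
      have hmul : 2 ^ (t * i) * (2 ^ t - 1) + 2 ^ (t * i) = 2 ^ (t * i + t) := by
        rw [hP]
        have : 2 ^ t - 1 + 1 = 2 ^ t := by omega
        calc 2 ^ (t * i) * (2 ^ t - 1) + 2 ^ (t * i)
            = 2 ^ (t * i) * (2 ^ t - 1 + 1) := by ring
          _ = 2 ^ (t * i) * 2 ^ t := by rw [this]
      have hcomm : (b / 2 ^ (t * i + t) + 1) * 2 ^ (t * i + t)
          = 2 ^ (t * i + t) * (b / 2 ^ (t * i + t)) + 2 ^ (t * i + t) := by ring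
      rw [hcomm]
      omega
    have hq2 : b / 2 ^ (t * i + t) + 1 < 2 ^ (t * s) := by
      by_contra hcon
      push_neg at hcon
      have : 2 ^ (t * s) * 2 ^ (t * i + t) ≤ (b / 2 ^ (t * i + t) + 1) * 2 ^ (t * i + t) :=
        Nat.mul_le_mul_right _ hcon
      have hb2 : b + 2 ^ (t * i) < 2 ^ (t * i + t) * 2 ^ (t * s) := by omega
      nlinarith
    -- f b < B * M - B
    have hfb : b % 2 ^ (t * i) + 2 ^ (t * i) * (b / 2 ^ (t * i + t)) + 2 ^ (t * i)
        < 2 ^ (t * i) * 2 ^ (t * s) := by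
      have hmb : b % 2 ^ (t * i) < 2 ^ (t * i) := Nat.mod_lt _ hBpos
      have h3 : 2 ^ (t * i) * (b / 2 ^ (t * i + t) + 2) ≤ 2 ^ (t * i) * 2 ^ (t * s) :=
        Nat.mul_le_mul_left _ (by omega)
      nlinarith
    show b % 2 ^ (t * i) + 2 ^ (t * i) * (b / 2 ^ (t * i + t))
        < 2 ^ (t * i) * 2 ^ (t * s) - 2 ^ (t * i)
    omega
  · intro b1 hb1 b2 hb2 heq
    simp only [Finset.coe_filter, Set.mem_setOf_eq, Finset.mem_range] at hb1 hb2
    have h1 := hrep b1 hb1.2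
    have h2 := hrep b2 hb2.2
    simp only at heq
    have hm1 : b1 % 2 ^ (t * i) < 2 ^ (t * i) := Nat.mod_lt _ hBpos
    have hm2 : b2 % 2 ^ (t * i) < 2 ^ (t * i) := Nat.mod_lt _ hBpos
    have hmodeq : b1 % 2 ^ (t * i) = b2 % 2 ^ (t * i) := by
      have e1 : (b1 % 2 ^ (t * i) + 2 ^ (t * i) * (b1 / 2 ^ (t * i + t))) % 2 ^ (t * i)
          = b1 % 2 ^ (t * i) := by
        rw [Nat.add_mul_mod_self_left, Nat.mod_mod_of_dvd _ dvd_rfl]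
      have e2 : (b2 % 2 ^ (t * i) + 2 ^ (t * i) * (b2 / 2 ^ (t * i + t))) % 2 ^ (t * i)
          = b2 % 2 ^ (t * i) := by
        rw [Nat.add_mul_mod_self_left, Nat.mod_mod_of_dvd _ dvd_rfl]
      rw [← e1, ← e2, heq]
    have hdiveq : b1 / 2 ^ (t * i + t) = b2 / 2 ^ (t * i + t) := by
      have e1 : (b1 % 2 ^ (t * i) + 2 ^ (t * i) * (b1 / 2 ^ (t * i + t))) / 2 ^ (t * i)
          = b1 / 2 ^ (t * i + t) := by
        rw [Nat.add_mul_div_left _ _ hBpos, Nat.div_eq_of_lt hm1, zero_add]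
      have e2 : (b2 % 2 ^ (t * i) + 2 ^ (t * i) * (b2 / 2 ^ (t * i + t))) / 2 ^ (t * i)
          = b2 / 2 ^ (t * i + t) := by
        rw [Nat.add_mul_div_left _ _ hBpos, Nat.div_eq_of_lt hm2, zero_add]
      rw [← e1, ← e2, heq]
    rw [h1, h2, hmodeq, hdiveq]

/-- The padded Hadamard code locally decodes against prefix-deletion
(type-1) errors: if `y` agrees with the `e`-shifted codeword, i.e.
`y a = f_{x^(t)}(a + e)` whenever `a + e ≤ 2^(tn) − 1`, where `0 ≤ e ≤ δ·2^(tn)`, then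
for a uniformly random `a ∈ {0, …, 2^(tn) − 2^(ti) − 1}` the 2-query decoder output
`y(a) ⊕ y(a + 2^(ti))` equals `x i` with probability at least `1 − δ − 2^(−t+1)`; hence
this encoding is a `(2, δ, 1/2 − δ − 2^(−t+1))` locally decodable code against errors
that delete a prefix of at most `δ·2^(tn)` symbols and append arbitrary symbols. -/
theorem padded_hadamard_decodes_prefix_deletions
    (t n : ℕ) (ht : 2 ≤ t) (hn : 1 ≤ n) (δ : ℝ) (hδ : δ ∈ Set.Icc (0 : ℝ) 1)
    (x : Fin n → Bool) (i : Fin n) (e : ℕ) (he : (e : ℝ) ≤ δ * 2 ^ (t * n))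
    (y : ℕ → Bool)
    (hy : ∀ a : ℕ, a + e ≤ 2 ^ (t * n) - 1 →
      y a = hadF (t * n) (paddedMsg t n x) (a + e)) :
    (1 - δ - 2 / 2 ^ t) * ((2 ^ (t * n) - 2 ^ (t * (i : ℕ)) : ℕ) : ℝ) ≤
      (((Finset.range (2 ^ (t * n) - 2 ^ (t * (i : ℕ)))).filter
          (fun a => xor (y a) (y (a + 2 ^ (t * (i : ℕ)))) = x i)).card : ℝ) := by
  obtain ⟨hδ0, hδ1⟩ := hδ
  have hi : (i : ℕ) < n := i.2
  have hB1 : 1 ≤ 2 ^ (t * (i : ℕ)) := Nat.one_le_two_pow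
  have hsplitexp : t * (i : ℕ) + t + t * (n - 1 - (i : ℕ)) = t * n := by
    have h1 : t * (i : ℕ) + t + t * (n - 1 - (i : ℕ))
        = t * ((i : ℕ) + 1 + (n - 1 - (i : ℕ))) := by ring
    rw [h1]
    congr 1
    omega
  have hNPM : 2 ^ (t * n) = 2 ^ (t * (i : ℕ) + t) * 2 ^ (t * (n - 1 - (i : ℕ))) := by
    rw [← pow_add, hsplitexp]
  have hexp1 : t * (i : ℕ) + 1 ≤ t * n := by
    have h := Nat.mul_le_mul_left t (show (i : ℕ) + 1 ≤ n by omega)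
    have h2 : t * ((i : ℕ) + 1) = t * (i : ℕ) + t := by ring
    omega
  have h2B : 2 * 2 ^ (t * (i : ℕ)) ≤ 2 ^ (t * n) := by
    calc 2 * 2 ^ (t * (i : ℕ)) = 2 ^ (t * (i : ℕ) + 1) := by ring
      _ ≤ 2 ^ (t * n) := Nat.pow_le_pow_right (by omega) hexp1
  -- the good set
  set G := (Finset.range (2 ^ (t * n) - 2 ^ (t * (i : ℕ)))).filter
      (fun a => a + e < 2 ^ (t * n) - 2 ^ (t * (i : ℕ)) ∧ goodFor t (i : ℕ) (a + e)) with hG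
  have hsub : G ⊆ (Finset.range (2 ^ (t * n) - 2 ^ (t * (i : ℕ)))).filter
      (fun a => xor (y a) (y (a + 2 ^ (t * (i : ℕ)))) = x i) := by
    intro a ha
    rw [hG, Finset.mem_filter, Finset.mem_range] at ha
    have haL := ha.1
    have hae := ha.2.1
    have hgood := ha.2.2
    rw [Finset.mem_filter, Finset.mem_range]
    refine ⟨haL, ?_⟩
    have h1 : a + e ≤ 2 ^ (t * n) - 1 := by omega
    have h2 : a + 2 ^ (t * (i : ℕ)) + e ≤ 2 ^ (t * n) - 1 := by omega
    rw [hy a h1, hy _ h2]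
    have h3 : a + 2 ^ (t * (i : ℕ)) + e = (a + e) + 2 ^ (t * (i : ℕ)) := by ring
    rw [h3]
    exact xor_hadF t n (by omega) x i (a + e) hgood
  -- bad sets
  set A1 := (Finset.range (2 ^ (t * n) - 2 ^ (t * (i : ℕ)))).filter
      (fun a => 2 ^ (t * n) - 2 ^ (t * (i : ℕ)) ≤ a + e) with hA1def
  set A2 := (Finset.range (2 ^ (t * n) - 2 ^ (t * (i : ℕ)))).filter
      (fun a => a + e < 2 ^ (t * n) - 2 ^ (t * (i : ℕ)) ∧ ¬ goodFor t (i : ℕ) (a + e)) with hA2def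
  have hA1 : A1.card ≤ e := by
    have hsub1 : A1 ⊆ Finset.Ico (2 ^ (t * n) - 2 ^ (t * (i : ℕ)) - e)
        (2 ^ (t * n) - 2 ^ (t * (i : ℕ))) := by
      intro a ha
      rw [hA1def, Finset.mem_filter, Finset.mem_range] at ha
      rw [Finset.mem_Ico]
      omega
    calc A1.card ≤ _ := Finset.card_le_card hsub1
      _ = 2 ^ (t * n) - 2 ^ (t * (i : ℕ)) - (2 ^ (t * n) - 2 ^ (t * (i : ℕ)) - e) :=
        Nat.card_Ico _ _
      _ ≤ e := by omega
  have hA2 : A2.card ≤ 2 ^ (t * (i : ℕ)) * 2 ^ (t * (n - 1 - (i : ℕ))) - 2 ^ (t * (i : ℕ)) := by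
    have hinj : A2.card ≤ ((Finset.range
        (2 ^ (t * (i : ℕ) + t) * 2 ^ (t * (n - 1 - (i : ℕ))) - 2 ^ (t * (i : ℕ)))).filter
          fun b => ¬ goodFor t (i : ℕ) b).card := by
      apply Finset.card_le_card_of_injOn (fun a => a + e)
      · intro a ha
        rw [Finset.mem_coe, Finset.mem_filter, Finset.mem_range] at ha
        rw [Finset.mem_coe, Finset.mem_filter, Finset.mem_range, ← hNPM]
        exact ⟨ha.2.1, ha.2.2⟩
      · intro a _ b _ hab
        simpa using hab
    exact le_trans hinj (bad_count t (i : ℕ) (n - 1 - (i : ℕ)))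
  -- covering
  have hcover : Finset.range (2 ^ (t * n) - 2 ^ (t * (i : ℕ))) ⊆ G ∪ A1 ∪ A2 := by
    intro a ha
    rw [Finset.mem_union, Finset.mem_union, hG, hA1def, hA2def,
      Finset.mem_filter, Finset.mem_filter, Finset.mem_filter]
    by_cases h1 : a + e < 2 ^ (t * n) - 2 ^ (t * (i : ℕ))
    · by_cases h2 : goodFor t (i : ℕ) (a + e)
      · exact Or.inl (Or.inl ⟨ha, h1, h2⟩)
      · exact Or.inr ⟨ha, h1, h2⟩
    · exact Or.inl (Or.inr ⟨ha, by omega⟩)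
  have hcount : 2 ^ (t * n) - 2 ^ (t * (i : ℕ)) ≤ G.card + e
      + (2 ^ (t * (i : ℕ)) * 2 ^ (t * (n - 1 - (i : ℕ))) - 2 ^ (t * (i : ℕ))) := by
    have h0 : (Finset.range (2 ^ (t * n) - 2 ^ (t * (i : ℕ)))).card
        ≤ G.card + A1.card + A2.card := by
      calc (Finset.range (2 ^ (t * n) - 2 ^ (t * (i : ℕ)))).card
          ≤ (G ∪ A1 ∪ A2).card := Finset.card_le_card hcover
        _ ≤ (G ∪ A1).card + A2.card := Finset.card_union_le _ _
        _ ≤ G.card + A1.card + A2.card := by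
            have := Finset.card_union_le G A1; omega
    rw [Finset.card_range] at h0
    omega
  -- pass to the reals
  have hcT : (G.card : ℝ) ≤ (((Finset.range (2 ^ (t * n) - 2 ^ (t * (i : ℕ)))).filter
      (fun a => xor (y a) (y (a + 2 ^ (t * (i : ℕ)))) = x i)).card : ℝ) :=
    Nat.cast_le.mpr (Finset.card_le_card hsub)
  have hBM : (2 ^ (t * (i : ℕ)) : ℕ) ≤ 2 ^ (t * (i : ℕ)) * 2 ^ (t * (n - 1 - (i : ℕ))) :=
    Nat.le_mul_of_pos_right _ (by positivity)
  have hBle : (2 ^ (t * (i : ℕ)) : ℕ) ≤ 2 ^ (t * n) := by omega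
  have hmainR : (2 : ℝ) ^ (t * n) - 2 ^ (t * (i : ℕ)) ≤ (G.card : ℝ) + e
      + ((2 : ℝ) ^ (t * (i : ℕ)) * 2 ^ (t * (n - 1 - (i : ℕ))) - 2 ^ (t * (i : ℕ))) := by
    have := Nat.cast_le (α := ℝ).mpr hcount
    rw [Nat.cast_sub hBle, Nat.cast_add, Nat.cast_add, Nat.cast_sub hBM] at this
    push_cast at this
    convert this using 2 <;> push_cast <;> ring
  have hgoalcast : ((2 ^ (t * n) - 2 ^ (t * (i : ℕ)) : ℕ) : ℝ)
      = (2 : ℝ) ^ (t * n) - 2 ^ (t * (i : ℕ)) := by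
    rw [Nat.cast_sub hBle]
    push_cast
    ring
  rw [hgoalcast]
  have hprod : (2 : ℝ) ^ (t * (i : ℕ)) * (2 : ℝ) ^ t * (2 : ℝ) ^ (t * (n - 1 - (i : ℕ)))
      = (2 : ℝ) ^ (t * n) := by
    rw [← pow_add, ← pow_add, hsplitexp]
  have h2Br : 2 * (2 : ℝ) ^ (t * (i : ℕ)) ≤ (2 : ℝ) ^ (t * n) := by exact_mod_cast h2B
  have hs0 : (0 : ℝ) < 2 ^ t := by positivity
  have hbB0 : (0 : ℝ) ≤ 2 ^ (t * (i : ℕ)) := by positivity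
  have hbM0 : (0 : ℝ) ≤ 2 ^ (t * (n - 1 - (i : ℕ))) := by positivity
  have he' : (e : ℝ) ≤ δ * (2 : ℝ) ^ (t * n) := he
  have he0 : (0 : ℝ) ≤ e := Nat.cast_nonneg e
  -- abbreviate
  set bN : ℝ := (2 : ℝ) ^ (t * n)
  set bB : ℝ := (2 : ℝ) ^ (t * (i : ℕ))
  set bM : ℝ := (2 : ℝ) ^ (t * (n - 1 - (i : ℕ)))
  set sR : ℝ := (2 : ℝ) ^ t
  have hD : 0 ≤ δ * (bN - bB) + 2 * (bN - bB) / sR - e - bB * bM + bB := by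
    have hge : 0 ≤ δ * (bN - bB) * sR + 2 * (bN - bB) - (e : ℝ) * sR - bB * bM * sR + bB * sR := by
      have hes : (e : ℝ) * sR ≤ δ * bN * sR :=
        mul_le_mul_of_nonneg_right he' hs0.le
      nlinarith [mul_nonneg (sub_nonneg.mpr hδ1) (mul_nonneg hbB0 hs0.le)]
    have h2 : δ * (bN - bB) + 2 * (bN - bB) / sR - e - bB * bM + bB
        = (δ * (bN - bB) * sR + 2 * (bN - bB) - (e : ℝ) * sR - bB * bM * sR + bB * sR) / sR := by
      field_simp
    rw [h2]
    exact div_nonneg hge hs0.le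
  have hexp2 : (1 - δ - 2 / sR) * (bN - bB)
      = (bN - bB) - δ * (bN - bB) - 2 * (bN - bB) / sR := by ring
  rw [hexp2]
  linarith [hD, hmainR, hcT]
end
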